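/- arXiv:2401.17578 — 2 statements merged into one kernel-verified Lean document; each statement's English description precedes it below -/
import Mathlib

section
/- Let X = X_1 × ⋯ × X_n where each X_i is a connected and separable topological space, and let ρ be a binary choice rule on X. If ρ has generalized L1-complexity representations (G, P, (u_E)_{E ∈ P}) and (G̃, P̃, (ũ_E)_{E ∈ P̃}), then G = G̃ and P = P̃, and there exist C > 0 and constants b_E ∈ ℝ such that ũ_E = C·u_E + b_E for every E ∈ P. -/
open Finset

variable {n : ℕ} {X : Fin n → Type*}

/-- A binary choice rule: values in [0,1] with ρ(x,y) = 1 - ρ(y,x). -/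
def IsBCR {Y : Type*} (ρ : Y → Y → ℝ) : Prop :=
  (∀ x y, ρ x y ∈ Set.Icc (0:ℝ) 1) ∧ ∀ x y, ρ x y = 1 - ρ y x

/-- A map u : X → ℝ depends only on the coordinates in E (i.e. is a map X_E → ℝ). -/
def DependsOnlyOn (E : Finset (Fin n)) (u : (∀ i, X i) → ℝ) : Prop :=
  ∀ x y : ∀ i, X i, (∀ i ∈ E, x i = y i) → u x = u y

/-- u is non-trivial as a map on X_E: it is not constant in any coordinate i ∈ E. -/
def NonTrivialOn (E : Finset (Fin n)) (u : (∀ i, X i) → ℝ) : Prop :=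
  ∀ i ∈ E, ∃ (x : ∀ i, X i) (t : X i), u (Function.update x i t) ≠ u x

/-- Generalized L1-complexity representation (G, P, (u_E)_{E ∈ P}). -/
def IsGenL1Rep [∀ i, TopologicalSpace (X i)]
    (ρ : (∀ i, X i) → (∀ i, X i) → ℝ) (G : ℝ → ℝ)
    (P : Finset (Finset (Fin n))) (u : Finset (Fin n) → (∀ i, X i) → ℝ) : Prop :=
  2 ≤ P.card ∧
  (∀ E ∈ P, E.Nonempty) ∧
  ((P : Set (Finset (Fin n))).PairwiseDisjoint id) ∧
  (∀ i : Fin n, ∃ E ∈ P, i ∈ E) ∧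
  (∀ E ∈ P, Continuous (u E)) ∧
  (∀ E ∈ P, DependsOnlyOn E (u E)) ∧
  (∀ E ∈ P, NonTrivialOn E (u E)) ∧
  ContinuousOn G (Set.Icc (-1) 1) ∧ StrictMonoOn G (Set.Icc (-1) 1) ∧
  (∀ x y : ∀ i, X i, (∑ E ∈ P, |u E x - u E y|) ≠ 0 →
    ρ x y = G ((∑ E ∈ P, u E x - ∑ E ∈ P, u E y) / ∑ E ∈ P, |u E x - u E y|)) ∧
  (∀ x y : ∀ i, X i, (∑ E ∈ P, |u E x - u E y|) = 0 → ρ x y = 1/2)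

set_option linter.unusedSectionVars false


private lemma sv_cauchy_linear (c : ℝ → ℝ) (lam : ℝ) (hlam : 0 < lam)
    (hadd : ∀ δ1 δ2, 0 ≤ δ1 → 0 ≤ δ2 → δ1 + δ2 ≤ lam → c (δ1 + δ2) = c δ1 + c δ2)
    (hpos : ∀ δ, 0 < δ → δ ≤ lam → 0 < c δ) :
    ∀ δ, 0 ≤ δ → δ ≤ lam → c δ = (c lam / lam) * δ := by
  have hc0 : c 0 = 0 := by
    have := hadd 0 0 le_rfl le_rfl (by linarith)
    simpa using this.symm
  have hmono : ∀ δ1 δ2, 0 ≤ δ1 → δ1 ≤ δ2 → δ2 ≤ lam → c δ1 ≤ c δ2 := by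
    intro δ1 δ2 h1 h12 h2
    have h := hadd δ1 (δ2 - δ1) h1 (by linarith) (by linarith)
    rcases eq_or_lt_of_le h12 with rfl | hlt
    · exact le_rfl
    · have := hpos (δ2 - δ1) (by linarith) (by linarith)
      have h' : c δ2 = c δ1 + c (δ2 - δ1) := by rw [← h]; ring_nf
      linarith
  have hnsmul : ∀ k : ℕ, ∀ μ, 0 ≤ μ → (k : ℝ) * μ ≤ lam → c ((k : ℝ) * μ) = (k : ℝ) * c μ := by
    intro k
    induction k with
    | zero => intro μ _ _; simpa using hc0
    | succ k ih =>
      intro μ hμ hk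
      have hkμ : (k : ℝ) * μ ≤ lam := by
        have : (k : ℝ) * μ ≤ (k + 1 : ℝ) * μ := by nlinarith
        push_cast at hk ⊢; nlinarith
      have h1 : c ((k : ℝ) * μ + μ) = c ((k : ℝ) * μ) + c μ := by
        apply hadd _ _ (by positivity) hμ
        push_cast at hk ⊢; nlinarith
      have h2 : ((k : ℕ) + 1 : ℝ) * μ = (k : ℝ) * μ + μ := by ring
      push_cast
      rw [h2, h1, ih μ hμ hkμ]; ring
  -- rational scaling: for q : ℚ, 0 ≤ q ≤ 1, c (q * lam) = q * c lam
  have hrat : ∀ q : ℚ, 0 ≤ q → q ≤ 1 → c ((q : ℝ) * lam) = (q : ℝ) * c lam := by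
    intro q hq0 hq1
    set m : ℕ := q.num.toNat with hm
    set d : ℕ := q.den with hd
    have hd0 : 0 < d := q.pos
    have hqcast : (q : ℝ) = (m : ℝ) / (d : ℝ) := by
      rw [hm, hd]
      rw [Rat.cast_def]
      congr 1
      norm_cast
      exact (Int.toNat_of_nonneg (Rat.num_nonneg.mpr hq0)).symm
    have hmd : (m : ℝ) ≤ (d : ℝ) := by
      have : (q : ℝ) ≤ 1 := by exact_mod_cast hq1
      rw [hqcast] at this
      have hdpos : (0:ℝ) < d := by exact_mod_cast hd0
      calc (m : ℝ) = ((m:ℝ)/(d:ℝ)) * d := by field_simp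
        _ ≤ 1 * d := by nlinarith
        _ = d := by ring
    set μ := lam / d with hμdef
    have hμ0 : 0 ≤ μ := by positivity
    have hdμ : (d : ℝ) * μ = lam := by
      rw [hμdef]; field_simp
    have hclam : c lam = (d : ℝ) * c μ := by
      rw [← hdμ]; exact hnsmul d μ hμ0 (by rw [hdμ])
    have hmμ : (m : ℝ) * μ ≤ lam := by
      rw [← hdμ]; apply mul_le_mul_of_nonneg_right hmd hμ0
    have hcm : c ((m : ℝ) * μ) = (m : ℝ) * c μ := hnsmul m μ hμ0 hmμ
    have hql : (q : ℝ) * lam = (m : ℝ) * μ := by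
      rw [hqcast, hμdef]; ring
    rw [hql, hcm, hqcast, hclam]
    have hdpos : (0:ℝ) < d := by exact_mod_cast hd0
    field_simp
  -- main
  intro δ hδ0 hδl
  rcases eq_or_lt_of_le hδ0 with rfl | hδpos
  · simp [hc0]
  rcases eq_or_lt_of_le hδl with rfl | hδlt
  · field_simp
  have hclam : 0 < c lam := hpos lam hlam le_rfl
  have hcδ : 0 < c δ := hpos δ hδpos (le_of_lt hδlt)
  have h1 : c lam / lam * δ ≤ c δ := by
    by_contra h
    push_neg at h
    -- c δ < (δ/lam) * c lam ; pick rational q in (c δ / c lam, δ / lam)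
    rw [div_mul_eq_mul_div, lt_div_iff₀ hlam] at h
    have hlt : c δ / c lam < δ / lam := by
      rw [div_lt_div_iff₀ hclam hlam]
      nlinarith
    obtain ⟨q, hq1, hq2⟩ := exists_rat_btwn hlt
    have hq0 : 0 ≤ q := by
      have : (0:ℝ) < c δ / c lam := by positivity
      have : (0:ℝ) < (q:ℝ) := lt_trans this hq1
      exact_mod_cast this.le
    have hqle1 : q ≤ 1 := by
      have : (q : ℝ) < δ / lam := hq2
      have : (q : ℝ) < 1 := lt_of_lt_of_le this (by rw [div_le_one hlam]; linarith)
      exact_mod_cast this.le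
    have heq := hrat q hq0 hqle1
    have hle : c ((q:ℝ) * lam) ≤ c δ := by
      apply hmono _ _ (by positivity) _ hδl
      exact (le_div_iff₀ hlam).mp hq2.le
    rw [heq] at hle
    have : c δ < (q:ℝ) * c lam := by
      rw [div_lt_iff₀ hclam] at hq1
      linarith [hq1]
    linarith
  have h2 : c δ ≤ c lam / lam * δ := by
    by_contra h
    push_neg at h
    rw [div_mul_eq_mul_div, div_lt_iff₀ hlam] at h
    have hlt : δ / lam < c δ / c lam := by
      rw [div_lt_div_iff₀ hlam hclam]
      nlinarith
    obtain ⟨q, hq1, hq2⟩ := exists_rat_btwn hlt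
    have hq0 : 0 ≤ q := by
      have : (0:ℝ) < δ / lam := by positivity
      have : (0:ℝ) < (q:ℝ) := lt_trans this hq1
      exact_mod_cast this.le
    have hqle1 : q ≤ 1 := by
      have hc : c δ ≤ c lam := hmono δ lam hδ0 hδlt.le le_rfl
      have : (q : ℝ) < c δ / c lam := hq2
      have : (q : ℝ) < 1 := lt_of_lt_of_le this (by rw [div_le_one hclam]; exact hc)
      exact_mod_cast this.le
    have heq := hrat q hq0 hqle1
    have hle : c δ ≤ c ((q:ℝ) * lam) := by
      apply hmono _ _ hδ0 _ _
      · exact (div_le_iff₀ hlam).mp hq1.le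
      · calc (q:ℝ) * lam ≤ 1 * lam := by
              apply mul_le_mul_of_nonneg_right _ hlam.le; exact_mod_cast hqle1
          _ = lam := one_mul lam
    rw [heq] at hle
    have : (q:ℝ) * c lam < c δ := by
      rw [lt_div_iff₀ hclam] at hq2
      linarith
    linarith
  linarith

private lemma sv_affine_of_incr (K : Set ℝ) (hK : K.OrdConnected) (F : ℝ → ℝ) (C lam : ℝ)
    (hlam : 0 < lam)
    (h : ∀ a ∈ K, ∀ δ, 0 ≤ δ → δ ≤ lam → a + δ ∈ K → F (a + δ) - F a = C * δ) :
    ∀ a ∈ K, ∀ a' ∈ K, F a' - F a = C * (a' - a) := by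
  have main : ∀ N : ℕ, ∀ a ∈ K, ∀ a' ∈ K, a ≤ a' → a' - a ≤ N * lam → F a' - F a = C * (a' - a) := by
    intro N
    induction N with
    | zero =>
      intro a ha a' ha' hle hN
      have : a' = a := by push_cast at hN; linarith
      subst this; ring
    | succ N ih =>
      intro a ha a' ha' hle hN
      set mid := max a (a' - lam) with hmid
      have hmid_mem : mid ∈ K := hK.out ha ha' ⟨le_max_left _ _, by
        apply max_le hle; linarith⟩
      have h1 : mid - a ≤ N * lam := by
        rcases max_cases a (a' - lam) with ⟨hm, _⟩ | ⟨hm, _⟩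
        · rw [hmid, hm]
          have : (0:ℝ) ≤ N * lam := by positivity
          linarith
        · rw [hmid, hm]; push_cast at hN ⊢; linarith
      have h2 : 0 ≤ a' - mid := by
        rcases max_cases a (a' - lam) with ⟨hm, _⟩ | ⟨hm, _⟩
        · rw [hmid, hm]; linarith
        · rw [hmid, hm]; linarith
      have h3 : a' - mid ≤ lam := by
        rcases max_cases a (a' - lam) with ⟨hm, hc⟩ | ⟨hm, _⟩
        · rw [hmid, hm]; linarith
        · rw [hmid, hm]; linarith
      have hstep : F a' - F mid = C * (a' - mid) := by
        have := h mid hmid_mem (a' - mid) h2 h3 (by rw [add_sub_cancel]; exact ha')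
        rwa [add_sub_cancel] at this
      have hind : F mid - F a = C * (mid - a) := ih a ha mid hmid_mem (le_max_left _ _) h1
      have : F a' - F a = (F a' - F mid) + (F mid - F a) := by ring
      rw [this, hstep, hind]; ring
  intro a ha a' ha'
  rcases le_total a a' with hle | hle
  · obtain ⟨N, hN⟩ := exists_nat_ge ((a' - a) / lam)
    exact main N a ha a' ha' hle (by rw [div_le_iff₀ hlam] at hN; linarith)
  · obtain ⟨N, hN⟩ := exists_nat_ge ((a - a') / lam)
    have := main N a' ha' a ha hle (by rw [div_le_iff₀ hlam] at hN; linarith)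
    linarith [this]


private lemma sv_pexider2 (I J : Set ℝ) (hI : I.OrdConnected) (hJ : J.OrdConnected)
    (p q : ℝ) (hp : p ∈ I) (hq : q ∈ I) (hpq : p < q)
    (p' q' : ℝ) (hp' : p' ∈ J) (hq' : q' ∈ J) (hpq' : p' < q')
    (f g : ℝ → ℝ)
    (H : ∀ s ∈ I, ∀ s' ∈ I, ∀ t ∈ J, ∀ t' ∈ J,
      (s + t ≤ s' + t' ↔ f s + g t ≤ f s' + g t'))
    (cauchy : ∀ (c : ℝ → ℝ) (lam : ℝ), 0 < lam →
      (∀ δ1 δ2, 0 ≤ δ1 → 0 ≤ δ2 → δ1 + δ2 ≤ lam → c (δ1 + δ2) = c δ1 + c δ2) →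
      (∀ δ, 0 < δ → δ ≤ lam → 0 < c δ) →
      ∀ δ, 0 ≤ δ → δ ≤ lam → c δ = (c lam / lam) * δ)
    (chain : ∀ (K : Set ℝ), K.OrdConnected → ∀ (F : ℝ → ℝ) (C lam : ℝ), 0 < lam →
      (∀ a ∈ K, ∀ δ, 0 ≤ δ → δ ≤ lam → a + δ ∈ K → F (a + δ) - F a = C * δ) →
      ∀ a ∈ K, ∀ a' ∈ K, F a' - F a = C * (a' - a)) :
    ∃ C : ℝ, 0 < C ∧ (∀ s ∈ I, ∀ s' ∈ I, f s' - f s = C * (s' - s)) ∧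
      (∀ t ∈ J, ∀ t' ∈ J, g t' - g t = C * (t' - t)) := by
  have Heq : ∀ s ∈ I, ∀ s' ∈ I, ∀ t ∈ J, ∀ t' ∈ J,
      s + t = s' + t' → f s + g t = f s' + g t' := by
    intro s hs s' hs' t ht t' ht' hst
    have h1 := (H s hs s' hs' t ht t' ht').mp (le_of_eq hst)
    have h2 := (H s' hs' s hs t' ht' t ht).mp (le_of_eq hst.symm)
    linarith
  set lam := min (q - p) (q' - p') with hlamdef
  have hlam : 0 < lam := lt_min (by linarith) (by linarith)
  have hlam1 : lam ≤ q - p := min_le_left _ _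
  have hlam2 : lam ≤ q' - p' := min_le_right _ _
  set c : ℝ → ℝ := fun δ => g (p' + δ) - g p' with hcdef
  set c' : ℝ → ℝ := fun δ => f (p + δ) - f p with hc'def
  -- increments of f equal c
  have key_f : ∀ s ∈ I, ∀ δ, 0 ≤ δ → δ ≤ q' - p' → s + δ ∈ I →
      f (s + δ) - f s = c δ := by
    intro s hs δ h0 hδ hsd
    have hmem : p' + δ ∈ J := hJ.out hp' hq' ⟨by linarith, by linarith⟩
    have := Heq (s + δ) hsd s hs p' hp' (p' + δ) hmem (by ring)
    simp only [hcdef]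
    linarith
  -- increments of g equal c'
  have key_g : ∀ t ∈ J, ∀ δ, 0 ≤ δ → δ ≤ q - p → t + δ ∈ J →
      g (t + δ) - g t = c' δ := by
    intro t ht δ h0 hδ htd
    have hmem : p + δ ∈ I := hI.out hp hq ⟨by linarith, by linarith⟩
    have := Heq (p + δ) hmem p hp t ht (t + δ) htd (by ring)
    simp only [hc'def]
    linarith
  have hcc' : ∀ δ, 0 ≤ δ → δ ≤ lam → c' δ = c δ := by
    intro δ h0 hδ
    have hmem : p + δ ∈ I := hI.out hp hq ⟨by linarith, by linarith⟩
    have := key_f p hp δ h0 (by linarith) hmem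
    simp only [hc'def]
    linarith
  have hadd : ∀ δ1 δ2, 0 ≤ δ1 → 0 ≤ δ2 → δ1 + δ2 ≤ lam → c (δ1 + δ2) = c δ1 + c δ2 := by
    intro δ1 δ2 h1 h2 h12
    have hm1 : p' + δ1 ∈ J := hJ.out hp' hq' ⟨by linarith, by linarith⟩
    have hm2 : p' + δ1 + δ2 ∈ J := hJ.out hp' hq' ⟨by linarith, by linarith⟩
    have := key_g (p' + δ1) hm1 δ2 h2 (by linarith) hm2
    have h2' := hcc' δ2 h2 (by linarith)
    simp only [hcdef] at *
    have harr : p' + (δ1 + δ2) = p' + δ1 + δ2 := by ring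
    rw [harr]
    linarith
  have hpos : ∀ δ, 0 < δ → δ ≤ lam → 0 < c δ := by
    intro δ h0 hδ
    have hmem : p' + δ ∈ J := hJ.out hp' hq' ⟨by linarith, by linarith⟩
    have := (H p hp p hp p' hp' (p' + δ) hmem)
    have hlt : ¬ (f p + g (p' + δ) ≤ f p + g p') := by
      intro hcon
      have := (H p hp p hp (p' + δ) hmem p' hp').mpr hcon
      linarith
    simp only [hcdef]
    push_neg at hlt
    linarith
  have hlin := cauchy c lam hlam hadd hpos
  set C := c lam / lam with hCdef
  have hC : 0 < C := div_pos (hpos lam hlam le_rfl) hlam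
  have incr_f : ∀ a ∈ I, ∀ δ, 0 ≤ δ → δ ≤ lam → a + δ ∈ I → f (a + δ) - f a = C * δ := by
    intro a ha δ h0 hδ had
    rw [key_f a ha δ h0 (by linarith) had, hlin δ h0 hδ]
  have incr_g : ∀ a ∈ J, ∀ δ, 0 ≤ δ → δ ≤ lam → a + δ ∈ J → g (a + δ) - g a = C * δ := by
    intro a ha δ h0 hδ had
    rw [key_g a ha δ h0 (by linarith) had, hcc' δ h0 hδ, hlin δ h0 hδ]
  exact ⟨C, hC, chain I hI f C lam hlam incr_f, chain J hJ g C lam hlam incr_g⟩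


private lemma sv_uniq_block {α : Type*} {P : Finset (Finset α)}
    (hdisj : (P : Set (Finset α)).PairwiseDisjoint id) {E F : Finset α}
    (hE : E ∈ P) (hF : F ∈ P) {i : α} (hiE : i ∈ E) (hiF : i ∈ F) : E = F := by
  by_contra h
  exact (Finset.disjoint_left.mp (hdisj hE hF h) hiE) hiF

private lemma sv_sum_single {α : Type*} (P : Finset α) {E : α} (hE : E ∈ P) (h : α → ℝ)
    (h0 : ∀ E' ∈ P, E' ≠ E → h E' = 0) : ∑ E' ∈ P, h E' = h E :=
  Finset.sum_eq_single_of_mem E hE h0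

private lemma sv_sum_pair {α : Type*} [DecidableEq α] (P : Finset α) {E F : α}
    (hE : E ∈ P) (hF : F ∈ P) (hEF : E ≠ F) (h : α → ℝ)
    (h0 : ∀ E' ∈ P, E' ≠ E → E' ≠ F → h E' = 0) : ∑ E' ∈ P, h E' = h E + h F := by
  have hsub : ({E, F} : Finset α) ⊆ P := by
    intro x hx
    rcases Finset.mem_insert.mp hx with rfl | hx
    · exact hE
    · rw [Finset.mem_singleton.mp hx]; exact hF
  rw [← Finset.sum_subset hsub]
  · exact Finset.sum_pair hEF
  · intro x hx hnx
    apply h0 x hx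
    · intro h; exact hnx (by rw [h]; exact Finset.mem_insert_self _ _)
    · intro h; exact hnx (by rw [h]; exact Finset.mem_insert.mpr (Or.inr (Finset.mem_singleton_self _)))

private lemma sv_ratio_mem {α : Type*} (P : Finset α) (a b : α → ℝ)
    (hd : (∑ E ∈ P, |a E - b E|) ≠ 0) :
    (∑ E ∈ P, a E - ∑ E ∈ P, b E) / (∑ E ∈ P, |a E - b E|) ∈ Set.Icc (-1 : ℝ) 1 := by
  have hd0 : 0 ≤ ∑ E ∈ P, |a E - b E| := Finset.sum_nonneg fun E _ => abs_nonneg _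
  have hdpos : 0 < ∑ E ∈ P, |a E - b E| := lt_of_le_of_ne hd0 (Ne.symm hd)
  have hnum : |∑ E ∈ P, a E - ∑ E ∈ P, b E| ≤ ∑ E ∈ P, |a E - b E| := by
    rw [← Finset.sum_sub_distrib]
    exact Finset.abs_sum_le_sum_abs _ _
  rw [Set.mem_Icc, ← abs_le, abs_div, abs_of_pos hdpos, div_le_one hdpos]
  exact hnum

private lemma sv_realize [∀ i, TopologicalSpace (X i)] [∀ i, ConnectedSpace (X i)]
    {P : Finset (Finset (Fin n))} {u : Finset (Fin n) → (∀ i, X i) → ℝ}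
    (hdisj : (P : Set (Finset (Fin n))).PairwiseDisjoint id)
    (hcover : ∀ i : Fin n, ∃ E ∈ P, i ∈ E)
    (hdep : ∀ E ∈ P, DependsOnlyOn E (u E))
    (v : Finset (Fin n) → ℝ) (hv : ∀ E ∈ P, ∃ x, u E x = v E) :
    ∃ x, ∀ E ∈ P, u E x = v E := by
  classical
  have hx0 : ∀ i, Nonempty (X i) := fun i => ConnectedSpace.toNonempty
  set xw : Finset (Fin n) → ∀ i, X i :=
    fun E => if h : ∃ x, u E x = v E then h.choose else Classical.arbitrary _ with hxw
  choose blk hblkP hblkmem using hcover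
  refine ⟨fun i => xw (blk i) i, ?_⟩
  intro E hE
  have h1 : u E (fun i => xw (blk i) i) = u E (xw E) := by
    apply hdep E hE
    intro i hi
    have hbe : blk i = E := sv_uniq_block hdisj (hblkP i) hE (hblkmem i) hi
    rw [hbe]
  have h2 : u E (xw E) = v E := by
    rw [hxw]
    simp only []
    rw [dif_pos (hv E hE)]
    exact (hv E hE).choose_spec
  rw [h1, h2]

private lemma sv_two_vals {P : Finset (Finset (Fin n))} {u : Finset (Fin n) → (∀ i, X i) → ℝ}
    (hne : ∀ E ∈ P, E.Nonempty) (hnt : ∀ E ∈ P, NonTrivialOn E (u E))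
    {E : Finset (Fin n)} (hE : E ∈ P) :
    ∃ pv qv : ℝ, (∃ x, u E x = pv) ∧ (∃ x, u E x = qv) ∧ pv < qv := by
  obtain ⟨i, hi⟩ := hne E hE
  obtain ⟨x, t, h⟩ := hnt E hE i hi
  rcases lt_or_gt_of_ne h with h' | h'
  · exact ⟨_, _, ⟨_, rfl⟩, ⟨_, rfl⟩, h'⟩
  · exact ⟨_, _, ⟨x, rfl⟩, ⟨_, rfl⟩, h'⟩

private lemma sv_range_ordconn [∀ i, TopologicalSpace (X i)] [∀ i, ConnectedSpace (X i)]
    {u : (∀ i, X i) → ℝ} (hc : Continuous u) : (Set.range u).OrdConnected :=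
  (isPreconnected_range hc).ordConnected
section Rep

variable [∀ i, TopologicalSpace (X i)] [∀ i, ConnectedSpace (X i)]
variable {ρ : (∀ i, X i) → (∀ i, X i) → ℝ} {G : ℝ → ℝ}
variable {P : Finset (Finset (Fin n))} {u : Finset (Fin n) → (∀ i, X i) → ℝ}

/-- Attainability of every ratio r ∈ [-1,1]. -/
private lemma sv_att (h1 : IsGenL1Rep ρ G P u) (r : ℝ) (hr : r ∈ Set.Icc (-1:ℝ) 1) :
    ∃ x y, (∑ E ∈ P, |u E x - u E y|) ≠ 0 ∧
      (∑ E ∈ P, u E x - ∑ E ∈ P, u E y) / (∑ E ∈ P, |u E x - u E y|) = r ∧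
      ρ x y = G r ∧ ρ y x = G (-r) := by
  classical
  obtain ⟨hcard, hne, hdisj, hcover, hcont, hdep, hnt, hGc, hGm, hfor, hfor0⟩ := h1
  obtain ⟨E, hE, F, hF, hEF⟩ := Finset.one_lt_card.mp (lt_of_lt_of_le one_lt_two hcard)
  have hFE : F ≠ E := hEF.symm
  obtain ⟨pE, qE, hpE, hqE, hpqE⟩ := sv_two_vals hne hnt hE
  obtain ⟨pF, qF, hpF, hqF, hpqF⟩ := sv_two_vals hne hnt hF
  set k := min (qE - pE) (qF - pF) / 2 with hk
  have hk0 : 0 < k := by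
    rw [hk]; apply div_pos (lt_min (by linarith) (by linarith)) (by norm_num)
  have hk1 : 2 * k ≤ qE - pE := by
    rw [hk]; have := min_le_left (qE - pE) (qF - pF); linarith
  have hk2 : 2 * k ≤ qF - pF := by
    rw [hk]; have := min_le_right (qE - pE) (qF - pF); linarith
  obtain ⟨hr1, hr2⟩ := hr
  have hx0 : ∀ i, Nonempty (X i) := fun i => ConnectedSpace.toNonempty
  set x₀ : ∀ i, X i := Classical.arbitrary _ with hx₀
  set v : Finset (Fin n) → ℝ :=
    fun E' => if E' = F then pF else if E' = E then pE + (1 + r) * k else u E' x₀ with hv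
  set w : Finset (Fin n) → ℝ :=
    fun E' => if E' = F then pF + (1 - r) * k else if E' = E then pE else u E' x₀ with hw
  have hvE : v E = pE + (1 + r) * k := by rw [hv]; simp [hEF]
  have hvF : v F = pF := by rw [hv]; simp
  have hwE : w E = pE := by rw [hw]; simp [hEF]
  have hwF : w F = pF + (1 - r) * k := by rw [hw]; simp
  have hvoth : ∀ E' ∈ P, E' ≠ E → E' ≠ F → v E' = u E' x₀ ∧ w E' = u E' x₀ := by
    intro E' _ h1' h2'
    constructor
    · rw [hv]; simp [h1', h2']
    · rw [hw]; simp [h1', h2']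
  -- realizability
  have hrealv : ∀ E' ∈ P, ∃ x, u E' x = v E' := by
    intro E' hE'
    by_cases h1' : E' = F
    · rw [h1', hvF]; exact hpF
    by_cases h2' : E' = E
    · rw [h2', hvE]
      have hoc := sv_range_ordconn (hcont E hE)
      have : pE + (1 + r) * k ∈ Set.range (u E) := by
        apply hoc.out hpE hqE
        constructor
        · nlinarith
        · nlinarith
      exact this
    · exact ⟨x₀, ((hvoth E' hE' h2' h1').1).symm⟩
  have hrealw : ∀ E' ∈ P, ∃ x, u E' x = w E' := by
    intro E' hE'
    by_cases h1' : E' = F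
    · rw [h1', hwF]
      have hoc := sv_range_ordconn (hcont F hF)
      have : pF + (1 - r) * k ∈ Set.range (u F) := by
        apply hoc.out hpF hqF
        constructor
        · nlinarith
        · nlinarith
      exact this
    by_cases h2' : E' = E
    · rw [h2', hwE]; exact hpE
    · exact ⟨x₀, ((hvoth E' hE' h2' h1').2).symm⟩
  obtain ⟨x, hx⟩ := sv_realize hdisj hcover hdep v hrealv
  obtain ⟨y, hy⟩ := sv_realize hdisj hcover hdep w hrealw
  have hd : (∑ E' ∈ P, |u E' x - u E' y|) = 2 * k := by
    rw [sv_sum_pair P hE hF hEF]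
    · rw [hx E hE, hy E hE, hx F hF, hy F hF, hvE, hwE, hvF, hwF]
      have h1' : |pE + (1 + r) * k - pE| = (1 + r) * k := by
        rw [abs_of_nonneg]; ring_nf; nlinarith
      have h2' : |pF - (pF + (1 - r) * k)| = (1 - r) * k := by
        rw [abs_of_nonpos]; ring_nf; nlinarith
      rw [h1', h2']; ring
    · intro E' hE' h1' h2'
      rw [hx E' hE', hy E' hE', (hvoth E' hE' h1' h2').1, (hvoth E' hE' h1' h2').2]
      simp
  have hnum : (∑ E' ∈ P, u E' x - ∑ E' ∈ P, u E' y) = 2 * r * k := by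
    rw [← Finset.sum_sub_distrib]
    rw [sv_sum_pair P hE hF hEF]
    · rw [hx E hE, hy E hE, hx F hF, hy F hF, hvE, hwE, hvF, hwF]; ring
    · intro E' hE' h1' h2'
      rw [hx E' hE', hy E' hE', (hvoth E' hE' h1' h2').1, (hvoth E' hE' h1' h2').2]
      simp
  have hdne : (∑ E' ∈ P, |u E' x - u E' y|) ≠ 0 := by rw [hd]; positivity
  have hratio : (∑ E' ∈ P, u E' x - ∑ E' ∈ P, u E' y) / (∑ E' ∈ P, |u E' x - u E' y|) = r := by
    rw [hnum, hd]; field_simp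
  have hdne' : (∑ E' ∈ P, |u E' y - u E' x|) ≠ 0 := by
    have : (∑ E' ∈ P, |u E' y - u E' x|) = ∑ E' ∈ P, |u E' x - u E' y| :=
      Finset.sum_congr rfl fun E' _ => abs_sub_comm _ _
    rw [this]; exact hdne
  refine ⟨x, y, hdne, hratio, ?_, ?_⟩
  · rw [hfor x y hdne, hratio]
  · rw [hfor y x hdne']
    congr 1
    have heq : (∑ E' ∈ P, |u E' y - u E' x|) = ∑ E' ∈ P, |u E' x - u E' y| :=
      Finset.sum_congr rfl fun E' _ => abs_sub_comm _ _
    have h1'' : (∑ E' ∈ P, u E' y - ∑ E' ∈ P, u E' x) = -(2 * r * k) := by linarith [hnum]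
    rw [heq, hd, h1'']
    field_simp

private lemma sv_Gsym (hρ : IsBCR ρ) (h1 : IsGenL1Rep ρ G P u) (r : ℝ)
    (hr : r ∈ Set.Icc (-1:ℝ) 1) : G r + G (-r) = 1 := by
  obtain ⟨x, y, _, _, hxy, hyx⟩ := sv_att h1 r hr
  have := hρ.2 x y
  rw [hxy, hyx] at this
  linarith

private lemma sv_G0 (hρ : IsBCR ρ) (h1 : IsGenL1Rep ρ G P u) : G 0 = 1 / 2 := by
  have := sv_Gsym hρ h1 0 (by norm_num)
  norm_num at this
  linarith

private lemma sv_le_G1 (hρ : IsBCR ρ) (h1 : IsGenL1Rep ρ G P u) : ∀ x y, ρ x y ≤ G 1 := by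
  intro x y
  have hGm := h1.2.2.2.2.2.2.2.2.1
  have hG0 := sv_G0 hρ h1
  have h01 : G 0 ≤ G 1 := (hGm.monotoneOn) (by norm_num) (by norm_num) (by norm_num)
  by_cases hd : (∑ E ∈ P, |u E x - u E y|) = 0
  · rw [h1.2.2.2.2.2.2.2.2.2.2 x y hd]
    rw [hG0] at h01
    linarith
  · rw [h1.2.2.2.2.2.2.2.2.2.1 x y hd]
    have hmem := sv_ratio_mem P (fun E => u E x) (fun E => u E y) hd
    exact (hGm.monotoneOn) hmem (by norm_num) hmem.2

private lemma sv_G1_gt (hρ : IsBCR ρ) (h1 : IsGenL1Rep ρ G P u) : 1 / 2 < G 1 := by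
  have hGm := h1.2.2.2.2.2.2.2.2.1
  have hG0 := sv_G0 hρ h1
  have := hGm (Set.mem_Icc.mpr (by norm_num : (-1:ℝ) ≤ 0 ∧ (0:ℝ) ≤ 1))
    (Set.mem_Icc.mpr (by norm_num : (-1:ℝ) ≤ 1 ∧ (1:ℝ) ≤ 1)) (by norm_num : (0:ℝ) < 1)
  linarith

/-- Pairs that differ only within one block. -/
private lemma sv_single (h1 : IsGenL1Rep ρ G P u) {E : Finset (Fin n)} (hE : E ∈ P)
    (x y : ∀ i, X i) (hagree : ∀ k, k ∉ E → x k = y k) :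
    (u E x = u E y → ρ x y = 1 / 2) ∧ (u E y < u E x → ρ x y = G 1) ∧
      (u E x < u E y → ρ x y = G (-1)) := by
  obtain ⟨hcard, hne, hdisj, hcover, hcont, hdep, hnt, hGc, hGm, hfor, hfor0⟩ := h1
  have hoth : ∀ F ∈ P, F ≠ E → u F x = u F y := by
    intro F hF hFE
    apply hdep F hF
    intro i hi
    apply hagree i
    exact Finset.disjoint_left.mp (hdisj hF hE hFE) hi
  have hdsum : (∑ E' ∈ P, |u E' x - u E' y|) = |u E x - u E y| := by
    apply sv_sum_single P hE
    intro E' hE' hne'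
    rw [hoth E' hE' hne']; simp
  have hnum : (∑ E' ∈ P, u E' x - ∑ E' ∈ P, u E' y) = u E x - u E y := by
    rw [← Finset.sum_sub_distrib]
    apply sv_sum_single P hE
    intro E' hE' hne'
    rw [hoth E' hE' hne']; simp
  refine ⟨?_, ?_, ?_⟩
  · intro h
    apply hfor0
    rw [hdsum, h]; simp
  · intro h
    have hd : (∑ E' ∈ P, |u E' x - u E' y|) ≠ 0 := by
      rw [hdsum]; simp only [ne_eq, abs_eq_zero]; intro hc; linarith [sub_eq_zero.mp hc]
    rw [hfor x y hd]
    congr 1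
    rw [hdsum, hnum, abs_of_pos (by linarith : (0:ℝ) < u E x - u E y)]
    exact div_self (ne_of_gt (by linarith))
  · intro h
    have hd : (∑ E' ∈ P, |u E' x - u E' y|) ≠ 0 := by
      rw [hdsum]; simp only [ne_eq, abs_eq_zero]; intro hc; linarith [sub_eq_zero.mp hc]
    rw [hfor x y hd]
    congr 1
    have hΔ : u E x - u E y < 0 := by linarith
    rw [hdsum, hnum, abs_of_neg hΔ, div_neg, div_self (ne_of_lt hΔ)]

/-- Pairs differing only at two coordinates in different blocks give interior ratios. -/
private lemma sv_mixed (h1 : IsGenL1Rep ρ G P u) {E F : Finset (Fin n)}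
    (hE : E ∈ P) (hF : F ∈ P) (hEF : E ≠ F) {i j : Fin n} (hi : i ∈ E) (hj : j ∈ F) :
    ∃ x y r, (∀ k, k ≠ i → k ≠ j → x k = y k) ∧ r ∈ Set.Icc (-1:ℝ) 1 ∧
      r ≠ -1 ∧ r ≠ 0 ∧ r ≠ 1 ∧ ρ x y = G r := by
  classical
  obtain ⟨hcard, hne, hdisj, hcover, hcont, hdep, hnt, hGc, hGm, hfor, hfor0⟩ := h1
  have hiF : i ∉ F := Finset.disjoint_left.mp (hdisj hE hF hEF) hi
  have hjE : j ∉ E := Finset.disjoint_left.mp (hdisj hF hE (Ne.symm hEF)) hj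
  have hij : i ≠ j := fun h => hjE (h ▸ hi)
  obtain ⟨x1, t1, ha0⟩ := hnt E hE i hi
  obtain ⟨x2, t2, hb0⟩ := hnt F hF j hj
  set z : ∀ k, X k := F.piecewise x2 x1 with hz
  have hzE : ∀ k ∈ E, z k = x1 k := by
    intro k hk
    exact Finset.piecewise_eq_of_notMem _ _ _ (Finset.disjoint_left.mp (hdisj hE hF hEF) hk)
  have hzF : ∀ k ∈ F, z k = x2 k := fun k hk => Finset.piecewise_eq_of_mem _ _ _ hk
  set α := u E x1 with hα
  set β := u F x2 with hβ
  set a0 := u E (Function.update x1 i t1) - α with ha0'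
  have ha0ne : a0 ≠ 0 := fun h => ha0 (by rw [ha0'] at h; rw [hα] at h; linarith [sub_eq_zero.mp h])
  set b0 := u F (Function.update x2 j t2) - β with hb0'
  have hb0ne : b0 ≠ 0 := fun h => hb0 (by rw [hb0'] at h; rw [hβ] at h; linarith [sub_eq_zero.mp h])
  -- u E z = α, u F z = β
  have hzEα : u E z = α := hdep E hE z x1 hzE
  have hzFβ : u F z = β := hdep F hF z x2 hzF
  -- the one-coordinate move maps
  set φ : X i → ℝ := fun s => u E (Function.update z i s) with hφ
  have hφc : Continuous φ := (hcont E hE).comp (continuous_const.update i continuous_id)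
  have hφoc : (Set.range φ).OrdConnected := (isPreconnected_range hφc).ordConnected
  have hφz : φ (z i) = α := by
    rw [hφ]; simp only [Function.update_eq_self]; exact hzEα
  have hφt1 : φ t1 = α + a0 := by
    rw [hφ]
    simp only []
    have : u E (Function.update z i t1) = u E (Function.update x1 i t1) := by
      apply hdep E hE
      intro k hk
      by_cases hki : k = i
      · subst hki; simp
      · rw [Function.update_of_ne hki, Function.update_of_ne hki]
        exact hzE k hk
    rw [this, ha0']; ring
  -- choose a, with α + a in range φ, a ≠ 0, |a| ≠ |b0|
  set a : ℝ := if |a0| = |b0| then a0 / 2 else a0 with ha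
  have hane : a ≠ 0 := by
    rw [ha]; split
    · intro h; apply ha0ne; linarith
    · exact ha0ne
  have habs : |a| ≠ |b0| := by
    rw [ha]; split
    · rename_i hcase
      rw [abs_div]
      simp only [abs_two]
      intro h
      rw [← hcase] at h
      have : |a0| ≠ 0 := fun hc => ha0ne (abs_eq_zero.mp hc)
      have h2 : |a0| > 0 := lt_of_le_of_ne (abs_nonneg _) (Ne.symm this)
      linarith
    · rename_i hcase; exact hcase
  have hmem : α + a ∈ Set.range φ := by
    have h1' : α ∈ Set.range φ := ⟨z i, hφz⟩
    have h2' : α + a0 ∈ Set.range φ := ⟨t1, hφt1⟩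
    rcases le_or_gt 0 a0 with hs | hs
    · apply hφoc.out h1' h2'
      constructor
      · rw [ha]; split <;> [linarith; linarith]
      · rw [ha]; split <;> [linarith; linarith]
    · apply hφoc.out h2' h1'
      constructor
      · rw [ha]; split <;> [linarith; linarith]
      · rw [ha]; split <;> [linarith; linarith]
  obtain ⟨ta, hta⟩ := hmem
  -- points used in both cases
  set xA : ∀ k, X k := Function.update z i ta with hxA
  set yA : ∀ k, X k := Function.update z j t2 with hyA
  have huExA : u E xA = α + a := hta
  have huFxA : u F xA = β := by
    apply Eq.trans _ hzFβ
    apply hdep F hF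
    intro k hk
    rw [hxA, Function.update_of_ne (fun hc : k = i => hiF (hc ▸ hk))]
  have huEyA : u E yA = α := by
    apply Eq.trans _ hzEα
    apply hdep E hE
    intro k hk
    rw [hyA, Function.update_of_ne (fun hc : k = j => hjE (hc ▸ hk))]
  have huFyA : u F yA = β + b0 := by
    have : u F (Function.update z j t2) = u F (Function.update x2 j t2) := by
      apply hdep F hF
      intro k hk
      by_cases hkj : k = j
      · subst hkj; simp
      · rw [Function.update_of_ne hkj, Function.update_of_ne hkj]
        exact hzF k hk
    rw [hyA, this, hb0']; ring
  set xB : ∀ k, X k := Function.update (Function.update z i ta) j t2 with hxB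
  have huExB : u E xB = α + a := by
    apply Eq.trans _ huExA
    apply hdep E hE
    intro k hk
    rw [hxB, Function.update_of_ne (fun hc : k = j => hjE (hc ▸ hk))]
  have huFxB : u F xB = β + b0 := by
    apply Eq.trans _ huFyA
    apply hdep F hF
    intro k hk
    rw [hxB, hyA]
    by_cases hkj : k = j
    · subst hkj; simp
    · rw [Function.update_of_ne hkj, Function.update_of_ne hkj,
        Function.update_of_ne (fun hc : k = i => hiF (hc ▸ hk))]
  -- get a pair with opposite-sign block differences
  have hmain : ∃ x y dE dF, (∀ k, k ≠ i → k ≠ j → x k = y k) ∧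
      u E x - u E y = dE ∧ u F x - u F y = dF ∧ dE * dF < 0 ∧ |dE| ≠ |dF| ∧
      (∀ F' ∈ P, F' ≠ E → F' ≠ F → u F' x = u F' y) := by
    have hother : ∀ (x y : ∀ k, X k), (∀ k, k ≠ i → k ≠ j → x k = y k) →
        ∀ F' ∈ P, F' ≠ E → F' ≠ F → u F' x = u F' y := by
      intro x y hxy F' hF' hF'E hF'F
      apply hdep F' hF'
      intro k hk
      apply hxy k
      · intro hc; subst hc
        exact (Finset.disjoint_left.mp (hdisj hF' hE hF'E) hk) hi
      · intro hc; subst hc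
        exact (Finset.disjoint_left.mp (hdisj hF' hF hF'F) hk) hj
    rcases lt_or_gt_of_ne (mul_ne_zero hane hb0ne : a * b0 ≠ 0) with hsign | hsign
    · -- opposite signs: use xB vs z
      refine ⟨xB, z, a, b0, ?_, ?_, ?_, hsign, habs, ?_⟩
      · intro k hki hkj
        rw [hxB, Function.update_of_ne hkj, Function.update_of_ne hki]
      · rw [huExB, hzEα]; ring
      · rw [huFxB, hzFβ]; ring
      · apply hother
        intro k hki hkj
        rw [hxB, Function.update_of_ne hkj, Function.update_of_ne hki]
    · -- same signs: use xA vs yA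
      refine ⟨xA, yA, a, -b0, ?_, ?_, ?_, by nlinarith, by rwa [abs_neg], ?_⟩
      · intro k hki hkj
        rw [hxA, hyA, Function.update_of_ne hki, Function.update_of_ne hkj]
      · rw [huExA, huEyA]; ring
      · rw [huFxA, huFyA]; ring
      · apply hother
        intro k hki hkj
        rw [hxA, hyA, Function.update_of_ne hki, Function.update_of_ne hkj]
  obtain ⟨x, y, dE, dF, hxy, hdE, hdF, hsign, habs', hoth⟩ := hmain
  have hdEne : dE ≠ 0 := by intro h; rw [h] at hsign; simp at hsign
  have hdFne : dF ≠ 0 := by intro h; rw [h] at hsign; simp at hsign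
  have hd : (∑ E' ∈ P, |u E' x - u E' y|) = |dE| + |dF| := by
    rw [sv_sum_pair P hE hF hEF]
    · rw [hdE, hdF]
    · intro E' hE' h1' h2'
      rw [hoth E' hE' h1' h2']; simp
  have hnum : (∑ E' ∈ P, u E' x - ∑ E' ∈ P, u E' y) = dE + dF := by
    rw [← Finset.sum_sub_distrib, sv_sum_pair P hE hF hEF]
    · rw [hdE, hdF]
    · intro E' hE' h1' h2'
      rw [hoth E' hE' h1' h2']; simp
  have hdpos : 0 < |dE| + |dF| := by
    have : 0 < |dE| := abs_pos.mpr hdEne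
    have : 0 ≤ |dF| := abs_nonneg _
    linarith
  have hdne : (∑ E' ∈ P, |u E' x - u E' y|) ≠ 0 := by rw [hd]; linarith
  have hstrict : |dE + dF| < |dE| + |dF| := by
    rcases lt_trichotomy dE 0 with h' | h' | h'
    · have hdF0 : 0 < dF := by nlinarith
      rw [abs_of_neg h', abs_of_pos hdF0, abs_lt]
      constructor <;> linarith
    · exact absurd h' hdEne
    · have hdF0 : dF < 0 := by nlinarith
      rw [abs_of_pos h', abs_of_neg hdF0, abs_lt]
      constructor <;> linarith
  have hnumne : dE + dF ≠ 0 := by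
    intro h
    apply habs'
    have : dF = -dE := by linarith
    rw [this, abs_neg]
  set r := (dE + dF) / (|dE| + |dF|) with hr
  refine ⟨x, y, r, hxy, ?_, ?_, ?_, ?_, ?_⟩
  · have := sv_ratio_mem P (fun E' => u E' x) (fun E' => u E' y) hdne
    rw [hnum, hd] at this
    exact this
  · intro h
    have : |r| < 1 := by
      rw [hr, abs_div, abs_of_pos hdpos, div_lt_one hdpos]
      exact hstrict
    rw [h] at this; norm_num at this
  · intro h
    rw [hr, div_eq_zero_iff] at h
    rcases h with h | h
    · exact hnumne h
    · linarith
  · intro h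
    have : |r| < 1 := by
      rw [hr, abs_div, abs_of_pos hdpos, div_lt_one hdpos]
      exact hstrict
    rw [h] at this; norm_num at this
  · rw [hfor x y hdne, hnum, hd]

private lemma sv_same_block (h1 : IsGenL1Rep ρ G P u) {E : Finset (Fin n)} (hE : E ∈ P)
    {i j : Fin n} (hi : i ∈ E) (hj : j ∈ E) (x y : ∀ k, X k)
    (hxy : ∀ k, k ≠ i → k ≠ j → x k = y k) :
    ρ x y = 1 / 2 ∨ ρ x y = G 1 ∨ ρ x y = G (-1) := by
  have hagree : ∀ k, k ∉ E → x k = y k := fun k hk =>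
    hxy k (fun hc => hk (hc ▸ hi)) (fun hc => hk (hc ▸ hj))
  obtain ⟨heq, hgt, hlt⟩ := sv_single h1 hE x y hagree
  rcases lt_trichotomy (u E x) (u E y) with h | h | h
  · exact Or.inr (Or.inr (hlt h))
  · exact Or.inl (heq h)
  · exact Or.inr (Or.inl (hgt h))

variable {Gt : ℝ → ℝ} {Pt : Finset (Finset (Fin n))} {ut : Finset (Fin n) → (∀ i, X i) → ℝ}

private lemma sv_M_eq (hρ : IsBCR ρ) (h1 : IsGenL1Rep ρ G P u) (h2 : IsGenL1Rep ρ Gt Pt ut) :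
    G 1 = Gt 1 := by
  obtain ⟨x, y, _, _, hxy, _⟩ := sv_att h1 1 (by norm_num)
  obtain ⟨x', y', _, _, hxy', _⟩ := sv_att h2 1 (by norm_num)
  have h1' : G 1 ≤ Gt 1 := hxy ▸ sv_le_G1 hρ h2 x y
  have h2' : Gt 1 ≤ G 1 := hxy' ▸ sv_le_G1 hρ h1 x' y'
  linarith

private lemma sv_same_trans (hρ : IsBCR ρ) (h1 : IsGenL1Rep ρ G P u)
    (h2 : IsGenL1Rep ρ Gt Pt ut) (i j : Fin n)
    (h : ∃ B ∈ P, i ∈ B ∧ j ∈ B) : ∃ B ∈ Pt, i ∈ B ∧ j ∈ B := by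
  obtain ⟨B, hB, hiB, hjB⟩ := h
  obtain ⟨Et, hEt, hiEt⟩ := h2.2.2.2.1 i
  obtain ⟨Ft, hFt, hjFt⟩ := h2.2.2.2.1 j
  by_cases hne : Et = Ft
  · exact ⟨Et, hEt, hiEt, hne ▸ hjFt⟩
  exfalso
  obtain ⟨x, y, r, hxy, hrmem, hrn1, hr0, hr1, hval⟩ := sv_mixed h2 hEt hFt hne hiEt hjFt
  have hGm2 := h2.2.2.2.2.2.2.2.2.1
  have hinj := hGm2.injOn
  have hG0t : Gt 0 = 1 / 2 := sv_G0 hρ h2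
  have hM : G 1 = Gt 1 := sv_M_eq hρ h1 h2
  have hGm1 : Gt (-1) = G (-1) := by
    have hs1 := sv_Gsym hρ h1 1 (by norm_num)
    have hs2 := sv_Gsym hρ h2 1 (by norm_num)
    have e1 : (-1 : ℝ) = -(1:ℝ) := by norm_num
    rw [e1]
    linarith
  have h1mem : (1:ℝ) ∈ Set.Icc (-1:ℝ) 1 := by norm_num
  have hm1mem : (-1:ℝ) ∈ Set.Icc (-1:ℝ) 1 := by norm_num
  have h0mem : (0:ℝ) ∈ Set.Icc (-1:ℝ) 1 := by norm_num
  rcases sv_same_block h1 hB hiB hjB x y hxy with hc | hc | hc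
  · rw [hval, ← hG0t] at hc
    exact hr0 (hinj hrmem h0mem hc)
  · rw [hval, hM] at hc
    exact hr1 (hinj hrmem h1mem hc)
  · rw [hval, ← hGm1] at hc
    exact hrn1 (hinj hrmem hm1mem hc)

private lemma sv_P_subset (hρ : IsBCR ρ) (h1 : IsGenL1Rep ρ G P u)
    (h2 : IsGenL1Rep ρ Gt Pt ut) : P ⊆ Pt := by
  intro E hE
  obtain ⟨i₀, hi₀⟩ := h1.2.1 E hE
  obtain ⟨Et, hEt, hiEt⟩ := h2.2.2.2.1 i₀
  have hEEt : E = Et := by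
    apply Finset.ext
    intro j
    constructor
    · intro hj
      obtain ⟨B, hB, hiB, hjB⟩ := sv_same_trans hρ h1 h2 i₀ j ⟨E, hE, hi₀, hj⟩
      rw [← sv_uniq_block h2.2.2.1 hB hEt hiB hiEt]
      exact hjB
    · intro hj
      obtain ⟨B, hB, hiB, hjB⟩ := sv_same_trans hρ h2 h1 i₀ j ⟨Et, hEt, hiEt, hj⟩
      rw [← sv_uniq_block h1.2.2.1 hB hE hiB hi₀]
      exact hjB
  rw [hEEt]; exact hEt

private lemma sv_half (hρ : IsBCR ρ) (h1 : IsGenL1Rep ρ G P u) :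
    ∀ x y, ((∑ E ∈ P, u E x) ≤ ∑ E ∈ P, u E y) ↔ ρ x y ≤ 1 / 2 := by
  intro x y
  obtain ⟨hcard, hne, hdisj, hcover, hcont, hdep, hnt, hGc, hGm, hfor, hfor0⟩ := h1
  have hG0 : G 0 = 1 / 2 := sv_G0 hρ ⟨hcard, hne, hdisj, hcover, hcont, hdep, hnt, hGc, hGm, hfor, hfor0⟩
  by_cases hd : (∑ E ∈ P, |u E x - u E y|) = 0
  · have hall : ∀ E ∈ P, u E x = u E y := by
      intro E hE
      have h0 := (Finset.sum_eq_zero_iff_of_nonneg (fun E _ => abs_nonneg (u E x - u E y))).mp hd E hE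
      have := abs_eq_zero.mp h0
      linarith
    have hsum : (∑ E ∈ P, u E x) = ∑ E ∈ P, u E y := Finset.sum_congr rfl hall
    rw [hsum, hfor0 x y hd]
    simp
  · rw [hfor x y hd]
    have hdpos : 0 < ∑ E ∈ P, |u E x - u E y| :=
      lt_of_le_of_ne (Finset.sum_nonneg fun E _ => abs_nonneg _) (Ne.symm hd)
    have hrmem := sv_ratio_mem P (fun E => u E x) (fun E => u E y) hd
    have h0mem : (0:ℝ) ∈ Set.Icc (-1:ℝ) 1 := by norm_num
    rw [← hG0, hGm.le_iff_le hrmem h0mem]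
    rw [div_le_iff₀ hdpos]
    constructor <;> intro h <;> nlinarith

private lemma sv_block_lt (hρ : IsBCR ρ) (h1 : IsGenL1Rep ρ G P u)
    (h2 : IsGenL1Rep ρ Gt P ut) {E : Finset (Fin n)} (hE : E ∈ P)
    (x y : ∀ k, X k) (hagree : ∀ k, k ∉ E → x k = y k) :
    u E y < u E x → ut E y < ut E x := by
  intro h
  have hval1 : ρ x y = G 1 := (sv_single h1 hE x y hagree).2.1 h
  have hG1 : 1 / 2 < G 1 := sv_G1_gt hρ h1
  have hGt1 : 1 / 2 < Gt 1 := sv_G1_gt hρ h2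
  have hM : G 1 = Gt 1 := sv_M_eq hρ h1 h2
  rcases lt_trichotomy (ut E x) (ut E y) with hc | hc | hc
  · exfalso
    have hval2 : ρ x y = Gt (-1) := (sv_single h2 hE x y hagree).2.2 hc
    have hs2 := sv_Gsym hρ h2 1 (by norm_num)
    rw [hval1] at hval2
    rw [show ((-1:ℝ)) = -(1:ℝ) by norm_num] at hval2
    linarith
  · exfalso
    have hval2 : ρ x y = 1 / 2 := (sv_single h2 hE x y hagree).1 hc
    rw [hval1] at hval2
    linarith
  · exact hc

private lemma sv_block_mono (hρ : IsBCR ρ) (h1 : IsGenL1Rep ρ G P u)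
    (h2 : IsGenL1Rep ρ Gt P ut) {E : Finset (Fin n)} (hE : E ∈ P) :
    ∀ x y, u E x ≤ u E y ↔ ut E x ≤ ut E y := by
  classical
  have hpair : ∀ x y, (∀ k, k ∉ E → x k = y k) → (u E x ≤ u E y ↔ ut E x ≤ ut E y) := by
    intro x y hagree
    constructor
    · intro h
      by_contra hc
      push_neg at hc
      have := sv_block_lt hρ h2 h1 hE x y hagree hc
      linarith
    · intro h
      by_contra hc
      push_neg at hc
      have := sv_block_lt hρ h1 h2 hE x y hagree hc
      linarith
  intro x y
  set z : ∀ k, X k := E.piecewise y x with hz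
  have hagree : ∀ k, k ∉ E → x k = z k := by
    intro k hk
    rw [hz, Finset.piecewise_eq_of_notMem _ _ _ hk]
  have hdep1 := h1.2.2.2.2.2.1 E hE
  have hdep2 := h2.2.2.2.2.2.1 E hE
  have hzy : u E z = u E y := hdep1 z y (fun k hk => Finset.piecewise_eq_of_mem _ _ _ hk)
  have hzy' : ut E z = ut E y := hdep2 z y (fun k hk => Finset.piecewise_eq_of_mem _ _ _ hk)
  rw [← hzy, ← hzy']
  exact hpair x z hagree

open Classical in
private noncomputable def svf (u ut : Finset (Fin n) → (∀ i, X i) → ℝ)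
    (E : Finset (Fin n)) : ℝ → ℝ :=
  fun s => if h : ∃ x, u E x = s then ut E h.choose else 0

private lemma svf_spec {u ut : Finset (Fin n) → (∀ i, X i) → ℝ} {E : Finset (Fin n)}
    (hmono : ∀ x y, u E x ≤ u E y ↔ ut E x ≤ ut E y) (x : ∀ i, X i) :
    svf u ut E (u E x) = ut E x := by
  classical
  unfold svf
  rw [dif_pos ⟨x, rfl⟩]
  have hspec : u E (Exists.choose (⟨x, rfl⟩ : ∃ x', u E x' = u E x)) = u E x :=
    Exists.choose_spec (⟨x, rfl⟩ : ∃ x', u E x' = u E x)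
  exact le_antisymm ((hmono _ x).mp hspec.le) ((hmono x _).mp hspec.ge)

end Rep

/-- Proposition 6 — identification of the generalized L1-complexity
representation: the partition, G, and the attribute utilities (up to positive affine
transformation) are unique. -/
theorem stmt_6 {n : ℕ} (X : Fin n → Type*)
    [∀ i, TopologicalSpace (X i)] [∀ i, ConnectedSpace (X i)]
    [∀ i, TopologicalSpace.SeparableSpace (X i)]
    (ρ : (∀ i, X i) → (∀ i, X i) → ℝ) (hρ : IsBCR ρ)
    (G Gt : ℝ → ℝ) (P Pt : Finset (Finset (Fin n)))
    (u ut : Finset (Fin n) → (∀ i, X i) → ℝ)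
    (h1 : IsGenL1Rep ρ G P u) (h2 : IsGenL1Rep ρ Gt Pt ut) :
    Set.EqOn G Gt (Set.Icc (-1) 1) ∧ P = Pt ∧
    ∃ C : ℝ, 0 < C ∧ ∃ b : Finset (Fin n) → ℝ,
      ∀ E ∈ P, ∀ x : ∀ i, X i, ut E x = C * u E x + b E := by
  classical
  have hPPt : P = Pt := Finset.Subset.antisymm (sv_P_subset hρ h1 h2) (sv_P_subset hρ h2 h1)
  subst hPPt
  have hcard := h1.1
  have hne := h1.2.1
  have hdisj := h1.2.2.1
  have hcover := h1.2.2.2.1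
  have hcont := h1.2.2.2.2.1
  have hdep := h1.2.2.2.2.2.1
  have hnt := h1.2.2.2.2.2.2.1
  have hmono : ∀ E ∈ P, ∀ x y, u E x ≤ u E y ↔ ut E x ≤ ut E y :=
    fun E hE => sv_block_mono hρ h1 h2 hE
  set f := svf u ut with hfdef
  have hf : ∀ E ∈ P, ∀ x, f E (u E x) = ut E x := fun E hE x => svf_spec (hmono E hE) x
  have horder : ∀ x y, ((∑ E ∈ P, u E x) ≤ ∑ E ∈ P, u E y) ↔
      ((∑ E ∈ P, ut E x) ≤ ∑ E ∈ P, ut E y) := by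
    intro x y
    rw [sv_half hρ h1 x y, sv_half hρ h2 x y]
  have hbox : ∀ v w : Finset (Fin n) → ℝ, (∀ E ∈ P, ∃ x, u E x = v E) →
      (∀ E ∈ P, ∃ x, u E x = w E) →
      ((∑ E ∈ P, v E) ≤ ∑ E ∈ P, w E ↔ (∑ E ∈ P, f E (v E)) ≤ ∑ E ∈ P, f E (w E)) := by
    intro v w hv hw
    obtain ⟨x, hx⟩ := sv_realize hdisj hcover hdep v hv
    obtain ⟨y, hy⟩ := sv_realize hdisj hcover hdep w hw
    have e1 : ∑ E ∈ P, v E = ∑ E ∈ P, u E x :=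
      Finset.sum_congr rfl fun E hE => (hx E hE).symm
    have e2 : ∑ E ∈ P, w E = ∑ E ∈ P, u E y :=
      Finset.sum_congr rfl fun E hE => (hy E hE).symm
    have e3 : ∑ E ∈ P, f E (v E) = ∑ E ∈ P, ut E x :=
      Finset.sum_congr rfl fun E hE => by rw [← hx E hE, hf E hE]
    have e4 : ∑ E ∈ P, f E (w E) = ∑ E ∈ P, ut E y :=
      Finset.sum_congr rfl fun E hE => by rw [← hy E hE, hf E hE]
    rw [e1, e2, e3, e4]
    exact horder x y
  have hx0 : ∀ i, Nonempty (X i) := fun i => ConnectedSpace.toNonempty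
  set x₀ : ∀ i, X i := Classical.arbitrary _ with hx₀
  have hpex : ∀ E ∈ P, ∀ F ∈ P, E ≠ F → ∃ C : ℝ, 0 < C ∧
      (∀ s ∈ Set.range (u E), ∀ s' ∈ Set.range (u E), f E s' - f E s = C * (s' - s)) ∧
      (∀ t ∈ Set.range (u F), ∀ t' ∈ Set.range (u F), f F t' - f F t = C * (t' - t)) := by
    intro E hE F hF hEF
    set rest := (P.erase E).erase F with hrest
    have hFmem : F ∈ P.erase E := Finset.mem_erase.mpr ⟨Ne.symm hEF, hF⟩
    have hsplit : ∀ g : Finset (Fin n) → ℝ,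
        ∑ E' ∈ P, g E' = g E + (g F + ∑ E' ∈ rest, g E') := by
      intro g
      rw [← Finset.add_sum_erase P g hE, ← Finset.add_sum_erase _ g hFmem]
    have hrest_ne : ∀ E' ∈ rest, E' ≠ E ∧ E' ≠ F := by
      intro E' hE'
      obtain ⟨hne1, h'⟩ := Finset.mem_erase.mp hE'
      obtain ⟨hne2, _⟩ := Finset.mem_erase.mp h'
      exact ⟨hne2, hne1⟩
    set vmk : ℝ → ℝ → Finset (Fin n) → ℝ :=
      fun s t E' => if E' = E then s else if E' = F then t else u E' x₀ with hvmk
    have hvmkE : ∀ s t, vmk s t E = s := by intro s t; rw [hvmk]; simp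
    have hvmkF : ∀ s t, vmk s t F = t := by
      intro s t; rw [hvmk]; simp [Ne.symm hEF]
    have hvmkrest : ∀ s t, ∀ E' ∈ rest, vmk s t E' = u E' x₀ := by
      intro s t E' hE'
      obtain ⟨hne2, hne1⟩ := hrest_ne E' hE'
      rw [hvmk]; simp [hne1, hne2]
    have hreal : ∀ s t, s ∈ Set.range (u E) → t ∈ Set.range (u F) →
        ∀ E' ∈ P, ∃ x, u E' x = vmk s t E' := by
      intro s t hs ht E' hE'
      by_cases h1' : E' = E
      · rw [h1']; rw [hvmkE]; exact hs
      by_cases h2' : E' = F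
      · rw [h2']; rw [hvmkF]; exact ht
      · refine ⟨x₀, ?_⟩
        rw [hvmk]; simp [h1', h2']
    have hsum1 : ∀ s t, ∑ E' ∈ P, vmk s t E' = s + (t + ∑ E' ∈ rest, u E' x₀) := by
      intro s t
      rw [hsplit (vmk s t), hvmkE, hvmkF]
      congr 2
      exact Finset.sum_congr rfl fun E' hE' => hvmkrest s t E' hE'
    have hsum2 : ∀ s t, ∑ E' ∈ P, f E' (vmk s t E') =
        f E s + (f F t + ∑ E' ∈ rest, f E' (u E' x₀)) := by
      intro s t
      rw [hsplit (fun E' => f E' (vmk s t E')), hvmkE, hvmkF]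
      congr 2
      exact Finset.sum_congr rfl fun E' hE' => by rw [hvmkrest s t E' hE']
    have H : ∀ s ∈ Set.range (u E), ∀ s' ∈ Set.range (u E),
        ∀ t ∈ Set.range (u F), ∀ t' ∈ Set.range (u F),
        (s + t ≤ s' + t' ↔ f E s + f F t ≤ f E s' + f F t') := by
      intro s hs s' hs' t ht t' ht'
      have hb := hbox (vmk s t) (vmk s' t') (hreal s t hs ht) (hreal s' t' hs' ht')
      rw [hsum1, hsum1, hsum2, hsum2] at hb
      constructor
      · intro h
        have := hb.mp (by linarith)
        linarith
      · intro h
        have := hb.mpr (by linarith)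
        linarith
    obtain ⟨pE, qE, hpE, hqE, hpqE⟩ := sv_two_vals hne hnt hE
    obtain ⟨pF, qF, hpF, hqF, hpqF⟩ := sv_two_vals hne hnt hF
    exact sv_pexider2 (Set.range (u E)) (Set.range (u F))
      (sv_range_ordconn (hcont E hE)) (sv_range_ordconn (hcont F hF))
      pE qE hpE hqE hpqE pF qF hpF hqF hpqF (f E) (f F) H
      sv_cauchy_linear sv_affine_of_incr
  obtain ⟨E₀, hE₀, F₀, hF₀, hEF₀⟩ := Finset.one_lt_card.mp (lt_of_lt_of_le one_lt_two hcard)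
  obtain ⟨C, hC, hslopeE₀, _⟩ := hpex E₀ hE₀ F₀ hF₀ hEF₀
  have hslope : ∀ E ∈ P, ∀ s ∈ Set.range (u E), ∀ s' ∈ Set.range (u E),
      f E s' - f E s = C * (s' - s) := by
    intro E hE
    by_cases hEE₀ : E = E₀
    · subst hEE₀; exact hslopeE₀
    · obtain ⟨C', hC', hsE, hsE₀⟩ := hpex E hE E₀ hE₀ hEE₀
      obtain ⟨p, q, hp, hq, hpq⟩ := sv_two_vals hne hnt hE₀
      have h1' := hsE₀ p hp q hq
      have h2' := hslopeE₀ p hp q hq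
      have hne' : q - p ≠ 0 := by intro h; linarith [sub_eq_zero.mp h]
      have hCC : C' = C := mul_right_cancel₀ hne' (h1'.symm.trans h2')
      rw [← hCC]
      exact hsE
  have haff : ∀ E ∈ P, ∀ x, ut E x = C * u E x + (ut E x₀ - C * u E x₀) := by
    intro E hE x
    have h := hslope E hE (u E x₀) ⟨x₀, rfl⟩ (u E x) ⟨x, rfl⟩
    rw [hf E hE x, hf E hE x₀] at h
    linarith
  have hEqOn : Set.EqOn G Gt (Set.Icc (-1) 1) := by
    intro r hr
    obtain ⟨x, y, hd, hratio, hxy, _⟩ := sv_att h1 r hr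
    have hdiff : ∀ E ∈ P, ut E x - ut E y = C * (u E x - u E y) := by
      intro E hE
      rw [haff E hE x, haff E hE y]; ring
    have hdt : (∑ E ∈ P, |ut E x - ut E y|) = C * ∑ E ∈ P, |u E x - u E y| := by
      rw [Finset.mul_sum]
      apply Finset.sum_congr rfl
      intro E hE
      rw [hdiff E hE, abs_mul, abs_of_pos hC]
    have hnumt : (∑ E ∈ P, ut E x - ∑ E ∈ P, ut E y) =
        C * (∑ E ∈ P, u E x - ∑ E ∈ P, u E y) := by
      rw [← Finset.sum_sub_distrib, ← Finset.sum_sub_distrib] at *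
      rw [Finset.mul_sum]
      exact Finset.sum_congr rfl fun E hE => hdiff E hE
    have hdtne : (∑ E ∈ P, |ut E x - ut E y|) ≠ 0 := by
      rw [hdt]; exact mul_ne_zero (ne_of_gt hC) hd
    have hval2 : ρ x y = Gt r := by
      rw [h2.2.2.2.2.2.2.2.2.2.1 x y hdtne]
      congr 1
      rw [hnumt, hdt, mul_div_mul_left _ _ (ne_of_gt hC)]
      exact hratio
    rw [← hxy, hval2]
  exact ⟨hEqOn, rfl, C, hC, fun E => ut E x₀ - C * u E x₀, fun E hE x => haff E hE x⟩
end

section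
/- (i) If a binary choice rule ρ on ℝⁿ has an L1-complexity representation (G, β), then ρ is weakly monotonic: for all x, x', y ∈ ℝⁿ with x' >_D x, ρ(x',y) ≥ ρ(x,y). (ii) If instead ρ has a linear differentiation representation (β, Σ, G) in which at least 2 coordinates of β are nonzero, then ρ is not weakly monotonic: there exist x, x', y ∈ ℝⁿ with x' >_D x such that ρ(x,y) > ρ(x',y). -/
open Finset

/-- Dominance x >_D y with respect to attribute weights β. -/
def DomB {n : ℕ} (β x y : Fin n → ℝ) : Prop :=
  (∀ k, β k * y k ≤ β k * x k) ∧ ∃ k, β k * y k < β k * x k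

/-- L1-complexity representation (G, β). -/
def IsL1Rep {n : ℕ} (ρ : (Fin n → ℝ) → (Fin n → ℝ) → ℝ) (G : ℝ → ℝ)
    (β : Fin n → ℝ) : Prop :=
  (∀ k, β k ≠ 0) ∧
  ContinuousOn G (Set.Icc (-1) 1) ∧
  StrictMonoOn G (Set.Icc (-1) 1) ∧
  (∀ r ∈ Set.Icc (-1:ℝ) 1, G r ∈ Set.Icc (0:ℝ) 1 ∧ G r = 1 - G (-r)) ∧
  ∀ x y : Fin n → ℝ, x ≠ y →
    ρ x y = G ((∑ k, β k * x k - ∑ k, β k * y k) / ∑ k, |β k * (x k - y k)|)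

/-- Linear differentiation representation (β, Σ, G). -/
def IsLDMRep {n : ℕ} (ρ : (Fin n → ℝ) → (Fin n → ℝ) → ℝ) (β : Fin n → ℝ)
    (S : Matrix (Fin n) (Fin n) ℝ) (G : ℝ → ℝ) : Prop :=
  S.PosDef ∧ Continuous G ∧ StrictMono G ∧
  ∀ x y : Fin n → ℝ, x ≠ y →
    ρ x y = G ((∑ k, β k * (x k - y k)) /
      Real.sqrt (∑ i, ∑ j, (x i - y i) * S i j * (x j - y j)))


lemma ratio_mono_aux {n : ℕ} (u v : Fin n → ℝ) (h : ∀ k, u k ≤ v k)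
    (hu : 0 < ∑ k, |u k|) (hv : 0 < ∑ k, |v k|) :
    (∑ k, u k) / (∑ k, |u k|) ≤ (∑ k, v k) / (∑ k, |v k|) := by
  have hAB : |∑ k, u k| ≤ ∑ k, |u k| := Finset.abs_sum_le_sum_abs _ _
  have hA'B' : |∑ k, v k| ≤ ∑ k, |v k| := Finset.abs_sum_le_sum_abs _ _
  have hDsum : ∑ k, (v k - u k) = ∑ k, v k - ∑ k, u k := Finset.sum_sub_distrib _ _
  have hD : 0 ≤ ∑ k, (v k - u k) := Finset.sum_nonneg fun k _ => sub_nonneg.2 (h k)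
  have h1 : ∑ k, |v k| ≤ ∑ k, |u k| + ∑ k, (v k - u k) := by
    rw [← Finset.sum_add_distrib]
    refine Finset.sum_le_sum fun k _ => ?_
    have h2 := abs_add_le (u k) (v k - u k)
    rw [abs_of_nonneg (sub_nonneg.2 (h k))] at h2
    simpa using h2
  have h2 : ∑ k, |u k| ≤ ∑ k, |v k| + ∑ k, (v k - u k) := by
    rw [← Finset.sum_add_distrib]
    refine Finset.sum_le_sum fun k _ => ?_
    have h3 := abs_add_le (v k) (u k - v k)
    rw [abs_of_nonpos (by linarith [h k] : u k - v k ≤ 0)] at h3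
    have : u k = v k + (u k - v k) := by ring
    rw [← this] at h3
    linarith
  obtain ⟨hA1, hA2⟩ := abs_le.mp hAB
  rw [div_le_div_iff₀ hu hv]
  rcases le_or_gt 0 (∑ k, u k) with hs | hs
  · nlinarith [mul_nonneg hs hD]
  · nlinarith [mul_nonneg hD (le_of_lt hu)]

lemma div_mem_Icc_aux (A B : ℝ) (h : |A| ≤ B) (hB : 0 < B) :
    A / B ∈ Set.Icc (-1:ℝ) 1 := by
  obtain ⟨h1, h2⟩ := abs_le.mp h
  constructor
  · rw [le_div_iff₀ hB]; linarith
  · rw [div_le_one hB]; exact h2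

lemma key_ratio {a m c z1 z2 : ℝ} (ha : 0 < a) (hc : 0 < c) (hΔ : 0 < a*c - m^2)
    (hs : 0 < a + c - 2*m) (hz : 0 < a*z1^2 + 2*m*z1*z2 + c*z2^2)
    (hne : (c-m)*z2 - (a-m)*z1 ≠ 0) :
    (z1 + z2) / Real.sqrt (a*z1^2 + 2*m*z1*z2 + c*z2^2)
      < ((c-m) + (a-m)) / Real.sqrt (a*(c-m)^2 + 2*m*(c-m)*(a-m) + c*(a-m)^2) := by
  set Q' := a*z1^2 + 2*m*z1*z2 + c*z2^2 with hQ'def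
  set Q := a*(c-m)^2 + 2*m*(c-m)*(a-m) + c*(a-m)^2 with hQdef
  have hQeq : Q = (a*c - m^2) * (a + c - 2*m) := by rw [hQdef]; ring
  have hQpos : 0 < Q := hQeq ▸ mul_pos hΔ hs
  have hCS : ((a*c - m^2) * (z1 + z2))^2 < Q * Q' := by
    have hid : Q * Q' - ((a*c - m^2)*(z1+z2))^2
        = (a*c - m^2) * ((c-m)*z2 - (a-m)*z1)^2 := by rw [hQdef, hQ'def]; ring
    nlinarith [mul_pos hΔ (pow_pos (abs_pos.2 hne) 2), sq_abs ((c-m)*z2 - (a-m)*z1)]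
  have hsQ : 0 < Real.sqrt Q := Real.sqrt_pos.2 hQpos
  have hsQ' : 0 < Real.sqrt Q' := Real.sqrt_pos.2 hz
  rw [div_lt_div_iff₀ hsQ' hsQ]
  have hss : (c - m) + (a - m) = a + c - 2*m := by ring
  rcases le_or_gt (z1 + z2) 0 with h0 | h0
  · have hl : (z1+z2) * Real.sqrt Q ≤ 0 := mul_nonpos_of_nonpos_of_nonneg h0 hsQ.le
    have hr : 0 < ((c-m) + (a-m)) * Real.sqrt Q' := mul_pos (by linarith) hsQ'
    linarith
  · have hQs : Real.sqrt Q ^ 2 = Q := Real.sq_sqrt hQpos.le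
    have hQ's : Real.sqrt Q' ^ 2 = Q' := Real.sq_sqrt hz.le
    have h1 : (a*c - m^2) * ((z1+z2)^2) < (a+c-2*m) * Q' := by
      have h2 : (a*c-m^2) * ((a*c-m^2) * (z1+z2)^2) < (a*c-m^2) * ((a+c-2*m) * Q') := by
        nlinarith [hCS]
      exact lt_of_mul_lt_mul_left h2 hΔ.le
    have hsq : ((z1+z2) * Real.sqrt Q)^2 < (((c-m)+(a-m)) * Real.sqrt Q')^2 := by
      rw [mul_pow, mul_pow, hQs, hQ's, hss]
      nlinarith [mul_lt_mul_of_pos_left h1 hs]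
    exact lt_of_pow_lt_pow_left₀ 2 (mul_nonneg (by linarith) hsQ'.le) hsq


/-- Proposition 12 — (i) the L1-complexity model is weakly monotonic;
(ii) any linear differentiation model with at least 2 nonzero attribute weights is
not weakly monotonic. -/
theorem stmt_13 {n : ℕ} :
    (∀ (ρ : (Fin n → ℝ) → (Fin n → ℝ) → ℝ),
      (∀ x y, ρ x y ∈ Set.Icc (0:ℝ) 1) → (∀ x y, ρ x y = 1 - ρ y x) →
      ∀ (G : ℝ → ℝ) (β : Fin n → ℝ), IsL1Rep ρ G β →
        ∀ x x' y : Fin n → ℝ, DomB β x' x → ρ x y ≤ ρ x' y) ∧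
    (∀ (ρ : (Fin n → ℝ) → (Fin n → ℝ) → ℝ),
      (∀ x y, ρ x y ∈ Set.Icc (0:ℝ) 1) → (∀ x y, ρ x y = 1 - ρ y x) →
      ∀ (G : ℝ → ℝ) (β : Fin n → ℝ) (S : Matrix (Fin n) (Fin n) ℝ),
        IsLDMRep ρ β S G →
        2 ≤ (Finset.univ.filter (fun k => β k ≠ 0)).card →
        ∃ x x' y : Fin n → ℝ, DomB β x' x ∧ ρ x' y < ρ x y) := by
  constructor
  · rintro ρ hicc hsym G β ⟨hβ, hGc, hGmono, hGprop, hform⟩ x x' y ⟨hdom, k0, hk0⟩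
    have hG0 : G 0 = 1/2 := by
      have h := (hGprop 0 (by norm_num)).2
      rw [neg_zero] at h; linarith
    have hmem : ∀ r : ℝ, -1 ≤ r → r ≤ 1 → r ∈ Set.Icc (-1:ℝ) 1 := fun r h1 h2 => ⟨h1, h2⟩
    have hpos : ∀ p q : Fin n → ℝ, p ≠ q → 0 < ∑ k, |β k * p k - β k * q k| := by
      intro p q hpq
      obtain ⟨k, hk⟩ := Function.ne_iff.mp hpq
      refine Finset.sum_pos' (fun k _ => abs_nonneg _) ⟨k, Finset.mem_univ k, ?_⟩
      rw [← mul_sub]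
      exact abs_pos.2 (mul_ne_zero (hβ k) (sub_ne_zero.2 hk))
    have hx'x : x' ≠ x := by
      intro h; rw [h] at hk0; exact lt_irrefl _ hk0
    have hform' : ∀ p q : Fin n → ℝ, p ≠ q →
        ρ p q = G ((∑ k, (β k * p k - β k * q k)) / ∑ k, |β k * p k - β k * q k|) := by
      intro p q hpq
      rw [hform p q hpq, Finset.sum_sub_distrib]
      congr 2
      exact Finset.sum_congr rfl fun k _ => by rw [mul_sub]
    by_cases hxy : x = y
    · -- x = y : ρ x y = 1/2, ρ x' y = G 1 ≥ G 0 = 1/2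
      have h1 : ρ x y = 1/2 := by rw [hxy]; have := hsym y y; linarith
      have hx'y : x' ≠ y := hxy ▸ hx'x
      rw [h1, hform' x' y hx'y]
      have hvy : ∀ k, 0 ≤ β k * x' k - β k * y k := fun k => by
        have := hdom k; rw [hxy] at this; linarith
      have habs : ∀ k, |β k * x' k - β k * y k| = β k * x' k - β k * y k :=
        fun k => abs_of_nonneg (hvy k)
      have hnum : ∑ k, |β k * x' k - β k * y k| = ∑ k, (β k * x' k - β k * y k) :=
        Finset.sum_congr rfl fun k _ => habs k
      have hden : 0 < ∑ k, |β k * x' k - β k * y k| := hpos x' y hx'y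
      rw [hnum] at hden ⊢
      rw [div_self hden.ne']
      calc (1:ℝ)/2 = G 0 := hG0.symm
        _ ≤ G 1 := hGmono.monotoneOn (by norm_num) (by norm_num) (by norm_num)
    · by_cases hx'y : x' = y
      · -- x' = y : ρ x' y = 1/2, ρ x y = G (-1) ≤ G 0 = 1/2
        have h1 : ρ x' y = 1/2 := by rw [hx'y]; have := hsym y y; linarith
        rw [h1, hform' x y hxy]
        have huy : ∀ k, β k * x k - β k * y k ≤ 0 := fun k => by
          have := hdom k; rw [hx'y] at this; linarith
        have habs : ∀ k, |β k * x k - β k * y k| = -(β k * x k - β k * y k) :=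
          fun k => abs_of_nonpos (huy k)
        have hnum : ∑ k, (β k * x k - β k * y k) = -∑ k, |β k * x k - β k * y k| := by
          rw [← Finset.sum_neg_distrib]
          exact Finset.sum_congr rfl fun k _ => by rw [habs k, neg_neg]
        have hden : 0 < ∑ k, |β k * x k - β k * y k| := hpos x y hxy
        rw [hnum, neg_div, div_self hden.ne']
        calc G (-1) ≤ G 0 := hGmono.monotoneOn (by norm_num) (by norm_num) (by norm_num)
          _ = 1/2 := hG0
      · -- main case
        rw [hform' x y hxy, hform' x' y hx'y]
        have hu := hpos x y hxy
        have hv := hpos x' y hx'y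
        have hrat := ratio_mono_aux (fun k => β k * x k - β k * y k)
          (fun k => β k * x' k - β k * y k)
          (fun k => by have := hdom k; linarith) hu hv
        exact hGmono.monotoneOn
          (div_mem_Icc_aux _ _ (Finset.abs_sum_le_sum_abs _ _) hu)
          (div_mem_Icc_aux _ _ (Finset.abs_sum_le_sum_abs _ _) hv)
          hrat
  · rintro ρ hicc hsym G β S ⟨hSpd, hGc, hGstrict, hform⟩ hcard
    obtain ⟨i, hi, j, hj, hij⟩ := Finset.one_lt_card.mp hcard
    rw [Finset.mem_filter] at hi hj
    have hbi : β i ≠ 0 := hi.2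
    have hbj : β j ≠ 0 := hj.2
    set a := S i i / (β i)^2 with ha_def
    set m := S i j / (β i * β j) with hm_def
    set c := S j j / (β j)^2 with hc_def
    set X : ℝ → ℝ → (Fin n → ℝ) :=
      fun α γ k => if k = i then α / β i else if k = j then γ / β j else 0 with hX
    set y : Fin n → ℝ := fun _ => 0 with hy
    -- basic facts about X
    have hXi : ∀ α γ, X α γ i = α / β i := by intro α γ; simp [hX]
    have hXj : ∀ α γ, X α γ j = γ / β j := by intro α γ; simp [hX, Ne.symm hij]
    have hXz : ∀ α γ k, k ≠ i → k ≠ j → X α γ k = 0 := by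
      intro α γ k h1 h2; simp [hX, h1, h2]
    have hpair : ∀ g : Fin n → ℝ, (∀ k, k ≠ i → k ≠ j → g k = 0) → ∑ k, g k = g i + g j := by
      intro g hg
      rw [← Finset.sum_subset (Finset.subset_univ ({i, j} : Finset (Fin n)))
          (fun k _ hk => by
            simp only [Finset.mem_insert, Finset.mem_singleton, not_or] at hk
            exact hg k hk.1 hk.2)]
      exact Finset.sum_pair hij
    have hβX : ∀ α γ k, β k * X α γ k = if k = i then α else if k = j then γ else 0 := by
      intro α γ k
      simp only [hX]
      split_ifs with h1 h2
      · subst h1; field_simp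
      · subst h2; field_simp
      · ring
    have hXne : ∀ α γ, ¬(α = 0 ∧ γ = 0) → X α γ ≠ y := by
      intro α γ h hzero
      apply h
      constructor
      · have h1 := congrFun hzero i
        rw [hXi] at h1
        have : α / β i = 0 := h1
        exact (div_eq_zero_iff.mp this).resolve_right hbi
      · have h1 := congrFun hzero j
        rw [hXj] at h1
        have : γ / β j = 0 := h1
        exact (div_eq_zero_iff.mp this).resolve_right hbj
    have hsum1 : ∀ α γ, ∑ k, β k * (X α γ k - y k) = α + γ := by
      intro α γ
      simp only [hy, sub_zero]
      rw [hpair (fun k => β k * X α γ k) (fun k h1 h2 => by show β k * X α γ k = 0; rw [hβX]; simp [h1, h2]),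
          hβX, hβX]
      simp [hij, Ne.symm hij]
    have hsymS : S j i = S i j := by
      have h1 := congrFun (congrFun hSpd.1 i) j
      simpa [Matrix.conjTranspose_apply] using h1
    have hQsum : ∀ α γ, ∑ k, ∑ l, (X α γ k - y k) * S k l * (X α γ l - y l)
        = a*α^2 + 2*m*α*γ + c*γ^2 := by
      intro α γ
      simp only [hy, sub_zero]
      rw [hpair (fun k => ∑ l, X α γ k * S k l * X α γ l)
          (fun k h1 h2 => by simp [hXz α γ k h1 h2])]
      rw [hpair (fun l => X α γ i * S i l * X α γ l)
          (fun l h1 h2 => by simp [hXz α γ l h1 h2]),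
          hpair (fun l => X α γ j * S j l * X α γ l)
          (fun l h1 h2 => by simp [hXz α γ l h1 h2])]
      rw [hXi, hXj, hsymS, ha_def, hm_def, hc_def]
      field_simp
      ring
    have hQpos : ∀ α γ, ¬(α = 0 ∧ γ = 0) → 0 < a*α^2 + 2*m*α*γ + c*γ^2 := by
      intro α γ h
      have hx0 : X α γ ≠ 0 := by
        intro hzero
        exact hXne α γ h (by rw [hzero]; rfl)
      have hp := hSpd.dotProduct_mulVec_pos hx0
      have heq : dotProduct (star (X α γ)) (S.mulVec (X α γ))
          = ∑ k, ∑ l, X α γ k * S k l * X α γ l := by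
        simp [dotProduct, Matrix.mulVec, Finset.mul_sum, mul_assoc]
      rw [heq] at hp
      have h2 := hQsum α γ
      simp only [hy, sub_zero] at h2
      rw [h2] at hp
      exact hp
    have ha : 0 < a := by
      have := hQpos 1 0 (by norm_num)
      nlinarith
    have hc : 0 < c := by
      have := hQpos 0 1 (by norm_num)
      nlinarith
    have hΔ : 0 < a*c - m^2 := by
      have h1 := hQpos c (-m) (fun h => hc.ne' h.1)
      nlinarith
    have hs : 0 < a + c - 2*m := by
      have := hQpos 1 (-1) (by norm_num)
      nlinarith
    -- the maximizer point
    rcases eq_or_ne (a - m) 0 with hg | hg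
    · -- perturb in the j direction
      refine ⟨X (c-m) (a-m), X (c-m) (a-m+1), y, ⟨?_, ⟨j, ?_⟩⟩, ?_⟩
      · intro k
        rw [hβX, hβX]
        split_ifs <;> linarith
      · rw [hβX, hβX]
        simp [Ne.symm hij]
      · have hcm : c - m ≠ 0 := by intro h0; linarith
        have hxne : X (c-m) (a-m) ≠ y := hXne _ _ (fun h => hcm h.1)
        have hx'ne : X (c-m) (a-m+1) ≠ y := hXne _ _ (fun h => by
          have := h.2; linarith)
        rw [hform _ y hx'ne, hform _ y hxne, hsum1, hsum1, hQsum, hQsum]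
        apply hGstrict
        apply key_ratio ha hc hΔ hs
        · exact hQpos _ _ (fun h => by have := h.2; linarith)
        · have hid : (c-m)*(a-m+1) - (a-m)*(c-m) = c - m := by ring
          rw [hid]; exact hcm
    · -- perturb in the i direction
      refine ⟨X (c-m) (a-m), X (c-m+1) (a-m), y, ⟨?_, ⟨i, ?_⟩⟩, ?_⟩
      · intro k
        rw [hβX, hβX]
        split_ifs <;> linarith
      · rw [hβX, hβX]
        simp
      · have hxne : X (c-m) (a-m) ≠ y := hXne _ _ (fun h => hg h.2)
        have hx'ne : X (c-m+1) (a-m) ≠ y := hXne _ _ (fun h => hg h.2)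
        rw [hform _ y hx'ne, hform _ y hxne, hsum1, hsum1, hQsum, hQsum]
        apply hGstrict
        apply key_ratio ha hc hΔ hs
        · exact hQpos _ _ (fun h => hg h.2)
        · have hid : (c-m)*(a-m) - (a-m)*(c-m+1) = -(a-m) := by ring
          rw [hid]; exact neg_ne_zero.mpr hg
end
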